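/- Consider the linear system İ^{d,k}_i(t) = −γ·I^{d,k}_i(t) + λᵢ·d·Θ(t), where Θ(t) = (1/d̄)·Σ_{d,k,i} d·m^{d,k}_i·I^{d,k}_i(t), d̄ = Σ_d d·m^d, λ₀ = λ, λ₁ = βλ, γ, λ > 0, β ∈ (0,1), m^{d,k}_i ≥ 0. If Σ_{d,k,i} d²·λᵢ·m^{d,k}_i/γ ≤ d̄, then V(t) = Σ_{d,k,i} (d·m^{d,k}_i/γ)·I^{d,k}_i(t) is non-increasing along solutions with nonnegative initial conditions; in fact dV/dt = Θ(t)·(−d̄ + Σ_{d,k,i} d²λᵢm^{d,k}_i/γ) ≤ 0. -/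

import Mathlib

/-- Lyapunov computation: under `Σ d²λᵢ m^{d,k}_i/γ ≤ d̄`, the function
`V(t) = Σ (d m^{d,k}_i/γ) I^{d,k}_i(t)` is non-increasing along nonnegative solutions,
with `dV/dt = Θ(t)(−d̄ + Σ d²λᵢ m^{d,k}_i/γ) ≤ 0`. -/
theorem stmt9 {K : Type*} [Fintype K] (D : ℕ) (γ lam β : ℝ)
    (hγ : 0 < γ) (hlam : 0 < lam) (hβ : β ∈ Set.Ioo (0:ℝ) 1)
    (lami : Fin 2 → ℝ) (hlami : lami 0 = lam ∧ lami 1 = β * lam)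
    (m : ℕ → K → Fin 2 → ℝ) (hm : ∀ d k i, 0 ≤ m d k i)
    (dbar : ℝ) (hdbar : dbar = ∑ d ∈ Finset.Icc 1 D, (d : ℝ) * ∑ k, ∑ i, m d k i)
    (hdbarpos : 0 < dbar)
    (I : ℕ → K → Fin 2 → ℝ → ℝ) (Θ : ℝ → ℝ)
    (hΘ : ∀ t, Θ t = (1 / dbar) *
      ∑ d ∈ Finset.Icc 1 D, ∑ k, ∑ i, (d : ℝ) * m d k i * I d k i t)
    (hODE : ∀ d ∈ Finset.Icc 1 D, ∀ k i, ∀ t ∈ Set.Ici (0:ℝ),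
      HasDerivAt (I d k i) (-γ * I d k i t + lami i * (d : ℝ) * Θ t) t)
    (hinit : ∀ d ∈ Finset.Icc 1 D, ∀ k i, 0 ≤ I d k i 0)
    (hcond : ∑ d ∈ Finset.Icc 1 D, ∑ k, ∑ i, (d : ℝ) ^ 2 * lami i * m d k i / γ ≤ dbar)
    (V : ℝ → ℝ)
    (hV : ∀ t, V t = ∑ d ∈ Finset.Icc 1 D, ∑ k, ∑ i, ((d : ℝ) * m d k i / γ) * I d k i t) :
    AntitoneOn V (Set.Ici 0) ∧
    ∀ t ∈ Set.Ici (0:ℝ),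
      HasDerivAt V (Θ t * (-dbar + ∑ d ∈ Finset.Icc 1 D,
        ∑ k, ∑ i, (d : ℝ) ^ 2 * lami i * m d k i / γ)) t ∧
      Θ t * (-dbar + ∑ d ∈ Finset.Icc 1 D,
        ∑ k, ∑ i, (d : ℝ) ^ 2 * lami i * m d k i / γ) ≤ 0 := by
  have hγ' : γ ≠ 0 := ne_of_gt hγ
  have hdbar' : dbar ≠ 0 := ne_of_gt hdbarpos
  set A := Finset.Icc 1 D with hA
  set S' : ℝ := ∑ d ∈ A, ∑ k, ∑ i, (d : ℝ) ^ 2 * lami i * m d k i / γ with hS'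
  set T : ℝ → ℝ := fun t => ∑ d ∈ A, ∑ k, ∑ i, (d : ℝ) * m d k i * I d k i t with hT
  have hTΘ : ∀ t, T t = dbar * Θ t := by
    intro t
    rw [hΘ t, ← mul_assoc, mul_one_div_cancel hdbar', one_mul]
  -- derivative of T
  have hTderiv : ∀ t ∈ Set.Ici (0:ℝ),
      HasDerivAt T (∑ d ∈ A, ∑ k, ∑ i,
        (d : ℝ) * m d k i * (-γ * I d k i t + lami i * (d : ℝ) * Θ t)) t := by
    intro t ht
    apply HasDerivAt.fun_sum; intro d hd
    apply HasDerivAt.fun_sum; intro k _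
    apply HasDerivAt.fun_sum; intro i _
    exact (hODE d hd k i t ht).const_mul _
  -- Θ satisfies scalar ODE
  set c : ℝ := γ * (S' / dbar - 1) with hc
  have hΘderiv : ∀ t ∈ Set.Ici (0:ℝ), HasDerivAt Θ (c * Θ t) t := by
    intro t ht
    have hterm : ∀ d ∈ A, ∀ k : K, ∀ i : Fin 2,
        (d : ℝ) * m d k i * (-γ * I d k i t + lami i * (d : ℝ) * Θ t)
        = -γ * ((d : ℝ) * m d k i * I d k i t)
          + γ * (((d : ℝ) ^ 2 * lami i * m d k i / γ) * Θ t) := by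
      intro d _ k i; field_simp
    have hsum : (∑ d ∈ A, ∑ k, ∑ i,
        (d : ℝ) * m d k i * (-γ * I d k i t + lami i * (d : ℝ) * Θ t))
        = -γ * T t + γ * (S' * Θ t) := by
      rw [hT, hS']
      simp only [Finset.mul_sum, Finset.sum_mul]
      rw [← Finset.sum_add_distrib]
      refine Finset.sum_congr rfl fun d hd => ?_
      rw [← Finset.sum_add_distrib]
      refine Finset.sum_congr rfl fun k _ => ?_
      rw [← Finset.sum_add_distrib]
      exact Finset.sum_congr rfl fun i _ => hterm d hd k i
    have h1 : HasDerivAt (fun s => (1 / dbar) * T s) (c * Θ t) t := by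
      have h2 := (hTderiv t ht).const_mul (1 / dbar)
      refine h2.congr_deriv ?_
      rw [hsum, hTΘ t, hc]
      field_simp
      ring
    exact h1.congr_of_eventuallyEq (Filter.Eventually.of_forall fun s => hΘ s)
  -- Θ is nonnegative on [0,∞) via the exponential trick
  have hΘ0 : 0 ≤ Θ 0 := by
    rw [hΘ 0]
    apply mul_nonneg (by positivity)
    apply Finset.sum_nonneg; intro d hd
    apply Finset.sum_nonneg; intro k _
    apply Finset.sum_nonneg; intro i _
    exact mul_nonneg (mul_nonneg (Nat.cast_nonneg d) (hm d k i)) (hinit d hd k i)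
  set g : ℝ → ℝ := fun t => Θ t * Real.exp (-c * t) with hg
  have hgderiv : ∀ t ∈ Set.Ici (0:ℝ), HasDerivAt g 0 t := by
    intro t ht
    have he : HasDerivAt (fun t : ℝ => Real.exp (-c * t)) (Real.exp (-c * t) * (-c)) t := by
      have := ((hasDerivAt_id t).const_mul (-c)).exp
      simpa using this
    have := (hΘderiv t ht).mul he
    refine this.congr_deriv ?_
    ring
  have hgcont : ContinuousOn g (Set.Ici 0) :=
    fun x hx => (hgderiv x hx).continuousAt.continuousWithinAt
  have hgdiff : DifferentiableOn ℝ g (interior (Set.Ici (0:ℝ))) := by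
    rw [interior_Ici]
    exact fun x hx => (hgderiv x (Set.mem_Ici.mpr (le_of_lt hx))).differentiableAt.differentiableWithinAt
  have hgconst : ∀ t ∈ Set.Ici (0:ℝ), g t = g 0 := by
    intro t ht
    have hmono : MonotoneOn g (Set.Ici 0) := by
      apply monotoneOn_of_deriv_nonneg (convex_Ici 0) hgcont hgdiff
      intro x hx
      rw [interior_Ici] at hx
      rw [(hgderiv x (Set.mem_Ici.mpr (le_of_lt hx))).deriv]
    have hanti : AntitoneOn g (Set.Ici 0) := by
      apply antitoneOn_of_deriv_nonpos (convex_Ici 0) hgcont hgdiff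
      intro x hx
      rw [interior_Ici] at hx
      rw [(hgderiv x (Set.mem_Ici.mpr (le_of_lt hx))).deriv]
    exact le_antisymm (hanti (Set.mem_Ici.mpr le_rfl) ht ht) (hmono (Set.mem_Ici.mpr le_rfl) ht ht)
  have hΘnonneg : ∀ t ∈ Set.Ici (0:ℝ), 0 ≤ Θ t := by
    intro t ht
    have h1 : 0 ≤ Θ t * Real.exp (-c * t) := by
      have := hgconst t ht
      rw [hg] at this
      simp only at this
      rw [this]
      simpa using hΘ0
    nlinarith [Real.exp_pos (-c * t)]
  -- derivative of V
  have hVderiv : ∀ t ∈ Set.Ici (0:ℝ), HasDerivAt V (Θ t * (-dbar + S')) t := by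
    intro t ht
    have hVfun : V = fun t => ∑ d ∈ A, ∑ k, ∑ i, ((d : ℝ) * m d k i / γ) * I d k i t :=
      funext hV
    rw [hVfun]
    have h1 : HasDerivAt (fun t => ∑ d ∈ A, ∑ k, ∑ i, ((d : ℝ) * m d k i / γ) * I d k i t)
        (∑ d ∈ A, ∑ k, ∑ i,
          ((d : ℝ) * m d k i / γ) * (-γ * I d k i t + lami i * (d : ℝ) * Θ t)) t := by
      apply HasDerivAt.fun_sum; intro d hd
      apply HasDerivAt.fun_sum; intro k _
      apply HasDerivAt.fun_sum; intro i _
      exact (hODE d hd k i t ht).const_mul _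
    refine h1.congr_deriv ?_
    have hterm : ∀ d ∈ A, ∀ k : K, ∀ i : Fin 2,
        ((d : ℝ) * m d k i / γ) * (-γ * I d k i t + lami i * (d : ℝ) * Θ t)
        = -((d : ℝ) * m d k i * I d k i t)
          + ((d : ℝ) ^ 2 * lami i * m d k i / γ) * Θ t := by
      intro d _ k i; field_simp
    have hsum : (∑ d ∈ A, ∑ k, ∑ i,
        ((d : ℝ) * m d k i / γ) * (-γ * I d k i t + lami i * (d : ℝ) * Θ t))
        = -(T t) + S' * Θ t := by
      rw [hT, hS']
      simp only [Finset.sum_mul, ← Finset.sum_neg_distrib]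
      rw [← Finset.sum_add_distrib]
      refine Finset.sum_congr rfl fun d hd => ?_
      rw [← Finset.sum_add_distrib]
      refine Finset.sum_congr rfl fun k _ => ?_
      rw [← Finset.sum_add_distrib]
      exact Finset.sum_congr rfl fun i _ => hterm d hd k i
    rw [hsum, hTΘ t]
    ring
  have hsign : ∀ t ∈ Set.Ici (0:ℝ), Θ t * (-dbar + S') ≤ 0 := by
    intro t ht
    have h1 : -dbar + S' ≤ 0 := by
      linarith [hcond]
    exact mul_nonpos_of_nonneg_of_nonpos (hΘnonneg t ht) h1
  constructor
  · apply antitoneOn_of_deriv_nonpos (convex_Ici 0)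
    · exact fun x hx => (hVderiv x hx).continuousAt.continuousWithinAt
    · rw [interior_Ici]
      exact fun x hx => (hVderiv x (Set.mem_Ici.mpr (le_of_lt hx))).differentiableAt.differentiableWithinAt
    · intro x hx
      rw [interior_Ici] at hx
      rw [(hVderiv x (Set.mem_Ici.mpr (le_of_lt hx))).deriv]
      exact hsign x (Set.mem_Ici.mpr (le_of_lt hx))
  · exact fun t ht => ⟨hVderiv t ht, hsign t ht⟩
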